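/- arXiv:math/0604208 — 2 statements merged into one kernel-verified Lean document; each statement's English description precedes it below -/
import Mathlib

section
/- For an n × n matrix A over T, |A| = -∞ if and only if for some 1 ≤ k ≤ n there exist k rows and n+1-k columns of A such that every entry in the intersection of these rows and columns equals -∞. -/
/-- The extended tropical semiring `T = ℝ ∪ ℝ^ν ∪ {-∞}`:
`bot` is `-∞`, `real a` is the real element `a`, `ghost a` is `a^ν`. -/
inductive T : Type where
  | bot : T
  | real : ℝ → T
  | ghost : ℝ → T

namespace T

noncomputable section

/-- Tropical addition `⊕` (max with respect to `-∞ ≺ a ≺ a^ν`, ties become ghosts). -/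
def add : T → T → T
  | bot, y => y
  | real a, bot => real a
  | ghost a, bot => ghost a
  | real a, real b => if a < b then real b else if b < a then real a else ghost a
  | real a, ghost b => if b < a then real a else ghost b
  | ghost a, real b => if a < b then real b else ghost a
  | ghost a, ghost b => ghost (max a b)

/-- Tropical multiplication `⊙` (addition of underlying reals, ghosts absorb). -/
def mul : T → T → T
  | bot, _ => bot
  | real _, bot => bot
  | ghost _, bot => bot
  | real a, real b => real (a + b)
  | real a, ghost b => ghost (a + b)
  | ghost a, real b => ghost (a + b)
  | ghost a, ghost b => ghost (a + b)

/-- The total order `⪯` on `T`: `-∞` least, order of reals, `a ≺ a^ν`. -/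
def le : T → T → Prop
  | bot, _ => True
  | real _, bot => False
  | real a, real b => a ≤ b
  | real a, ghost b => a ≤ b
  | ghost _, bot => False
  | ghost a, real b => a < b
  | ghost a, ghost b => a ≤ b

/-- Membership in the ghost ideal `U̅ = U ∪ {-∞}`. -/
def IsGhost : T → Prop
  | bot => True
  | real _ => False
  | ghost _ => True

/-- Membership in `ℝ ∪ {-∞}` (non-ghost elements). -/
def RealOrBot : T → Prop
  | bot => True
  | real _ => True
  | ghost _ => False

/-- The ghost map `ν`. -/
def nu : T → T
  | bot => bot
  | real a => ghost a
  | ghost a => ghost a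

/-- Tropical sum of a list. -/
def sumList : List T → T := fun l => l.foldr add bot

/-- Tropical sum over a finite index set. -/
def sum {α : Type*} (s : Finset α) (f : α → T) : T := sumList (s.toList.map f)

/-- Tropical product of a list. -/
def prodList : List T → T := fun l => l.foldr mul (real 0)

/-- The weight of a permutation `σ` in a matrix: `a_{1,σ(1)} ⊙ ⋯ ⊙ a_{n,σ(n)}`. -/
def permProd {n : ℕ} (A : Matrix (Fin n) (Fin n) T) (σ : Equiv.Perm (Fin n)) : T :=
  prodList ((List.finRange n).map fun i => A i (σ i))

/-- The tropical determinant (permanent) `|A| = ⨁_σ a_{1,σ(1)} ⊙ ⋯ ⊙ a_{n,σ(n)}`. -/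
def det {n : ℕ} (A : Matrix (Fin n) (Fin n) T) : T :=
  sum (Finset.univ : Finset (Equiv.Perm (Fin n))) (fun σ => permProd A σ)

/-- Tropical dependence of a family of `m` vectors in `T^(n)`:
some tropical linear combination with coefficients in `ℝ ∪ {-∞}`, not all `-∞`,
lands in the ghost part `U̅^(n)`. -/
def Dependent {m n : ℕ} (v : Fin m → Fin n → T) : Prop :=
  ∃ α : Fin m → T, (∀ i, RealOrBot (α i)) ∧ (∃ i, α i ≠ bot) ∧
    ∀ j, IsGhost (sum Finset.univ fun i => mul (α i) (v i j))

/-- The tropical rank: maximal number of tropically independent rows. -/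
def rk {m n : ℕ} (A : Matrix (Fin m) (Fin n) T) : ℕ :=
  sSup {k | ∃ f : Fin k → Fin m, Function.Injective f ∧ ¬ Dependent (fun i => A (f i))}

end

end T

namespace T

lemma add_eq_bot (x y : T) : add x y = bot ↔ x = bot ∧ y = bot := by
  cases x <;> cases y <;> simp [add] <;> split_ifs <;> simp

lemma sumList_eq_bot (l : List T) : sumList l = bot ↔ ∀ x ∈ l, x = bot := by
  induction l with
  | nil => simp [sumList]
  | cons a l ih =>
    simp only [sumList, List.foldr_cons, List.mem_cons]
    rw [show (List.foldr add bot l) = sumList l from rfl] at *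
    rw [add_eq_bot, ih]
    aesop

lemma mul_eq_bot (x y : T) : mul x y = bot ↔ x = bot ∨ y = bot := by
  cases x <;> cases y <;> simp [mul]

lemma prodList_eq_bot (l : List T) : prodList l = bot ↔ ∃ x ∈ l, x = bot := by
  induction l with
  | nil => simp [prodList]
  | cons a l ih =>
    simp only [prodList, List.foldr_cons, List.mem_cons]
    rw [show (List.foldr mul (real 0) l) = prodList l from rfl] at *
    rw [mul_eq_bot, ih]
    aesop

lemma sum_eq_bot {α : Type*} (s : Finset α) (f : α → T) :
    sum s f = bot ↔ ∀ a ∈ s, f a = bot := by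
  rw [sum, sumList_eq_bot]
  simp

lemma permProd_eq_bot {n : ℕ} (A : Matrix (Fin n) (Fin n) T) (σ : Equiv.Perm (Fin n)) :
    permProd A σ = bot ↔ ∃ i, A i (σ i) = bot := by
  rw [permProd, prodList_eq_bot]
  simp [List.mem_finRange]

lemma det_eq_bot_iff {n : ℕ} (A : Matrix (Fin n) (Fin n) T) :
    det A = bot ↔ ∀ σ : Equiv.Perm (Fin n), ∃ i, A i (σ i) = bot := by
  rw [det, sum_eq_bot]
  simp [permProd_eq_bot]

end T

/-- `|A| = -∞` iff for some `1 ≤ k ≤ n` there are `k` rows and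
`n+1-k` columns all of whose common entries are `-∞`. -/
theorem stmt12 {n : ℕ} (A : Matrix (Fin n) (Fin n) T) :
    T.det A = T.bot ↔
      ∃ k, 1 ≤ k ∧ k ≤ n ∧
        ∃ (R C : Finset (Fin n)), R.card = k ∧ C.card = n + 1 - k ∧
          ∀ i ∈ R, ∀ j ∈ C, A i j = T.bot := by
  rw [T.det_eq_bot_iff]
  classical
  set t : Fin n → Finset (Fin n) := fun i => Finset.univ.filter (fun j => A i j ≠ T.bot) with ht
  constructor
  · intro h
    -- no permutation avoids bot ⇒ no injective Hall matching ⇒ Hall's condition fails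
    have hno : ¬ ∃ f : Fin n → Fin n, Function.Injective f ∧ ∀ i, f i ∈ t i := by
      rintro ⟨f, hf, hmem⟩
      have hbij : Function.Bijective f := Finite.injective_iff_bijective.mp hf
      obtain ⟨i, hi⟩ := h (Equiv.ofBijective f hbij)
      have := hmem i
      simp only [ht, Finset.mem_filter] at this
      exact this.2 hi
    have hhall := (Finset.all_card_le_biUnion_card_iff_existsInjective' t).not.mpr hno
    push_neg at hhall
    obtain ⟨S, hS⟩ := hhall
    set U := S.biUnion t with hU
    have hUcard : U.card < S.card := hS
    have hk1 : 1 ≤ S.card := by omega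
    have hkn : S.card ≤ n := by
      simpa using Finset.card_le_univ S
    have hcompl : Uᶜ.card = n - U.card := by
      simp [Finset.card_compl]
    have hle : n + 1 - S.card ≤ Uᶜ.card := by omega
    obtain ⟨C, hCsub, hCcard⟩ := Finset.exists_subset_card_eq hle
    refine ⟨S.card, hk1, hkn, S, C, rfl, hCcard, ?_⟩
    intro i hi j hj
    by_contra hne
    have hjU : j ∈ U := Finset.mem_biUnion.mpr ⟨i, hi, by simp [ht, hne]⟩
    exact (Finset.mem_compl.mp (hCsub hj)) hjU
  · rintro ⟨k, hk1, hkn, R, C, hR, hC, hbot⟩ σ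
    by_contra h
    push_neg at h
    -- σ maps R injectively into Cᶜ
    have himg : R.image σ ⊆ Cᶜ := by
      intro j hj
      obtain ⟨i, hi, rfl⟩ := Finset.mem_image.mp hj
      rw [Finset.mem_compl]
      intro hjC
      exact h i (hbot i hi _ hjC)
    have hcard : (R.image σ).card = k := by
      rw [Finset.card_image_of_injective _ σ.injective, hR]
    have hCc : Cᶜ.card = n - (n + 1 - k) := by
      simp [Finset.card_compl, hC]
    have := Finset.card_le_card himg
    omega
end

section
/- An n × n matrix over T whose rows are tropically dependent (i.e., whose tropical rank is less than n) is tropically singular. -/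
namespace T

noncomputable section AuxProof

/-- The value of an element of `T` in `WithBot ℝ`. -/
def val : T → WithBot ℝ
  | bot => ⊥
  | real a => (a : WithBot ℝ)
  | ghost a => (a : WithBot ℝ)

/-- The underlying real value (junk value `0` at `bot`). -/
def nval : T → ℝ
  | bot => 0
  | real a => a
  | ghost a => a

lemma val_ne_bot {x : T} (h : x ≠ bot) : val x = (nval x : WithBot ℝ) := by
  cases x with
  | bot => exact absurd rfl h
  | real a => rfl
  | ghost a => rfl

lemma val_add (x y : T) : val (add x y) = max (val x) (val y) := by
  cases x with
  | bot => cases y <;> simp [add, val]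
  | real a =>
    cases y with
    | bot => simp [add, val]
    | real b =>
      simp only [add]
      split_ifs with h1 h2
      · simp only [val]; exact (max_eq_right (by exact_mod_cast h1.le)).symm
      · simp only [val]; exact (max_eq_left (by exact_mod_cast h2.le)).symm
      · have hab : a = b := le_antisymm (not_lt.1 h2) (not_lt.1 h1)
        subst hab; simp [val]
    | ghost b =>
      simp only [add]
      split_ifs with h1
      · simp only [val]; exact (max_eq_left (by exact_mod_cast h1.le)).symm
      · simp only [val]; exact (max_eq_right (by exact_mod_cast (not_lt.1 h1))).symm
  | ghost a =>
    cases y with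
    | bot => simp [add, val]
    | real b =>
      simp only [add]
      split_ifs with h1
      · simp only [val]; exact (max_eq_right (by exact_mod_cast h1.le)).symm
      · simp only [val]; exact (max_eq_left (by exact_mod_cast (not_lt.1 h1))).symm
    | ghost b =>
      simp only [add, val]
      exact_mod_cast (WithBot.coe_max a b)

lemma val_mul (x y : T) : val (mul x y) = val x + val y := by
  cases x <;> cases y <;> simp [mul, val, WithBot.coe_add]

lemma isGhost_mul_left {x : T} (h : IsGhost x) (y : T) : IsGhost (mul x y) := by
  cases x <;> cases y <;> simp_all [mul, IsGhost]

lemma isGhost_mul_right (x : T) {y : T} (h : IsGhost y) : IsGhost (mul x y) := by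
  cases x <;> cases y <;> simp_all [mul, IsGhost]

lemma mul_bot' (x : T) : mul x bot = bot := by cases x <;> rfl

lemma bot_mul' (x : T) : mul bot x = bot := rfl

lemma isGhost_add_of_isGhost {x y : T} (hx : IsGhost x) (hy : IsGhost y) :
    IsGhost (add x y) := by
  cases x <;> cases y <;> simp_all [add, IsGhost]

lemma isGhost_add_left_le {x y : T} (hy : IsGhost y) (h : val x ≤ val y) :
    IsGhost (add x y) := by
  cases x with
  | bot => cases y <;> simpa [add] using hy
  | real a =>
    cases y with
    | bot => exact absurd h (by simp [val])
    | real b => exact absurd hy (by simp [IsGhost])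
    | ghost b =>
      have hab : a ≤ b := by simpa [val] using h
      simp [add, IsGhost, not_lt.2 hab]
  | ghost a => exact isGhost_add_of_isGhost trivial hy

lemma add_real_of_lt {x : T} {a : ℝ} (h : val x < (a : WithBot ℝ)) :
    add x (real a) = real a := by
  cases x with
  | bot => rfl
  | real b =>
    have : b < a := by simpa [val] using h
    simp [add, this, not_lt.2 this.le]
  | ghost b =>
    have : b < a := by simpa [val] using h
    simp [add, this]

lemma real_add_of_lt {y : T} {a : ℝ} (h : val y < (a : WithBot ℝ)) :
    add (real a) y = real a := by
  cases y with
  | bot => rfl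
  | real b =>
    have : b < a := by simpa [val] using h
    simp [add, this, not_lt.2 this.le]
  | ghost b =>
    have : b < a := by simpa [val] using h
    simp [add, this]

lemma sumList_cons (x : T) (l : List T) : sumList (x :: l) = add x (sumList l) := rfl

lemma sumList_nil : sumList [] = bot := rfl

lemma val_sumList_lt {l : List T} {c : WithBot ℝ} (hc : ⊥ < c)
    (h : ∀ y ∈ l, val y < c) : val (sumList l) < c := by
  induction l with
  | nil => simpa [sumList_nil, val] using hc
  | cons x l ih =>
    rw [sumList_cons, val_add]
    exact max_lt (h x (by simp)) (ih fun y hy => h y (by simp [hy]))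

lemma le_val_sumList {l : List T} {y : T} (hy : y ∈ l) : val y ≤ val (sumList l) := by
  induction l with
  | nil => simp at hy
  | cons x l ih =>
    rw [sumList_cons, val_add]
    rcases List.mem_cons.1 hy with h | h
    · subst h; exact le_max_left _ _
    · exact le_trans (ih h) (le_max_right _ _)

lemma sumList_eq_real {a : ℝ} {l₁ l₂ : List T}
    (h : ∀ y ∈ l₁ ++ l₂, val y < (a : WithBot ℝ)) :
    sumList (l₁ ++ real a :: l₂) = real a := by
  induction l₁ with
  | nil =>
    simp only [List.nil_append, sumList_cons]
    exact real_add_of_lt (val_sumList_lt (WithBot.bot_lt_coe a)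
      (fun y hy => h y (by simp [hy])))
  | cons x l₁ ih =>
    rw [List.cons_append, sumList_cons,
      ih (fun y hy => h y (by simp only [List.mem_append] at hy ⊢; tauto))]
    exact add_real_of_lt (h x (by simp))

lemma isGhost_sumList_or (l : List T) :
    IsGhost (sumList l) ∨ ∃ a l₁ l₂, l = l₁ ++ real a :: l₂ ∧
      ∀ y ∈ l₁ ++ l₂, val y < (a : WithBot ℝ) := by
  induction l with
  | nil => exact Or.inl trivial
  | cons x l ih =>
    rcases ih with hg | ⟨a, l₁, l₂, rfl, hlt⟩
    · cases x with
      | bot => exact Or.inl (by rw [sumList_cons]; exact isGhost_add_of_isGhost trivial hg)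
      | ghost b => exact Or.inl (by rw [sumList_cons]; exact isGhost_add_of_isGhost trivial hg)
      | real b =>
        rcases le_or_gt ((b : WithBot ℝ)) (val (sumList l)) with hle | hgt
        · exact Or.inl (by rw [sumList_cons]; exact isGhost_add_left_le hg hle)
        · refine Or.inr ⟨b, [], l, rfl, fun y hy => ?_⟩
          exact lt_of_le_of_lt (le_val_sumList (by simpa using hy)) hgt
    · have hsl : sumList (l₁ ++ real a :: l₂) = real a := sumList_eq_real hlt
      rcases lt_trichotomy (val x) ((a : WithBot ℝ)) with hl | he | hgt
      · refine Or.inr ⟨a, x :: l₁, l₂, rfl, fun y hy => ?_⟩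
        rcases List.mem_cons.1 (by simpa using hy : y ∈ x :: (l₁ ++ l₂)) with h | h
        · subst h; exact hl
        · exact hlt y h
      · cases x with
        | bot => exact absurd he (by simp [val])
        | real b =>
          have hb : b = a := by simpa [val] using he
          subst hb
          refine Or.inl ?_
          rw [sumList_cons, hsl]
          simp [add, lt_irrefl, IsGhost]
        | ghost b =>
          have hb : b = a := by simpa [val] using he
          subst hb
          refine Or.inl ?_
          rw [sumList_cons, hsl]
          simp [add, lt_irrefl, IsGhost]
      · cases x with
        | bot => exact absurd hgt (by simp [val])
        | real b =>
          have hab : a < b := by simpa [val] using hgt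
          refine Or.inr ⟨b, [], l₁ ++ real a :: l₂, rfl, fun y hy => ?_⟩
          simp only [List.nil_append] at hy
          rcases List.mem_append.1 hy with h | h
          · exact lt_trans (hlt y (by simp [h])) (by exact_mod_cast hab)
          · rcases List.mem_cons.1 h with h' | h'
            · subst h'; simpa [val] using hab
            · exact lt_trans (hlt y (by simp [h'])) (by exact_mod_cast hab)
        | ghost b =>
          have hab : a ≤ b := le_of_lt (by simpa [val] using hgt)
          refine Or.inl ?_
          rw [sumList_cons, hsl]
          simp [add, IsGhost, not_lt.2 hab]

lemma sum_def {β : Type*} (s : Finset β) (f : β → T) :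
    T.sum s f = sumList (s.toList.map f) := rfl

lemma sum_eq_real {β : Type*} {s : Finset β} {f : β → T} {i : β} {a : ℝ}
    (hi : i ∈ s) (hfi : f i = real a)
    (hlt : ∀ k ∈ s, k ≠ i → val (f k) < (a : WithBot ℝ)) :
    T.sum s f = real a := by
  obtain ⟨t₁, t₂, ht⟩ := List.append_of_mem (Finset.mem_toList.2 hi)
  have hnd := s.nodup_toList
  rw [ht] at hnd
  rw [List.nodup_append] at hnd
  have hi1 : i ∉ t₁ := fun hc => hnd.2.2 i hc i List.mem_cons_self rfl
  have hi2 : i ∉ t₂ := (List.nodup_cons.1 hnd.2.1).1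
  have hmem : ∀ k, k ∈ t₁ ∨ k ∈ t₂ → k ∈ s ∧ k ≠ i := by
    intro k hk
    constructor
    · rw [← Finset.mem_toList, ht]
      rcases hk with h | h
      · exact List.mem_append.2 (Or.inl h)
      · exact List.mem_append.2 (Or.inr (List.mem_cons_of_mem _ h))
    · rintro rfl
      rcases hk with h | h
      · exact hi1 h
      · exact hi2 h
  rw [sum_def, ht, List.map_append, List.map_cons, hfi]
  refine sumList_eq_real fun y hy => ?_
  rcases List.mem_append.1 hy with h | h <;>
  · obtain ⟨k, hk, rfl⟩ := List.mem_map.1 h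
    obtain ⟨hks, hki⟩ := hmem k (by tauto)
    exact hlt k hks hki

lemma exists_max_of_not_isGhost {β : Type*} {s : Finset β} {f : β → T}
    (h : ¬ IsGhost (T.sum s f)) :
    ∃ i ∈ s, ∃ a : ℝ, f i = real a ∧ ∀ k ∈ s, k ≠ i → val (f k) < (a : WithBot ℝ) := by
  rcases isGhost_sumList_or (s.toList.map f) with hg | ⟨a, l₁, l₂, hdec, hlt⟩
  · exact absurd hg h
  · obtain ⟨u₁, u₂', hu, hm1, hm2⟩ := List.map_eq_append_iff.1 hdec
    obtain ⟨i, u₂, hu2, hfi, hm3⟩ := List.map_eq_cons_iff.1 hm2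
    refine ⟨i, ?_, a, hfi, ?_⟩
    · rw [← Finset.mem_toList, hu, hu2]
      exact List.mem_append.2 (Or.inr List.mem_cons_self)
    · intro k hk hki
      have hkl : k ∈ u₁ ∨ k ∈ u₂ := by
        have : k ∈ s.toList := Finset.mem_toList.2 hk
        rw [hu, hu2] at this
        rcases List.mem_append.1 this with h' | h'
        · exact Or.inl h'
        · rcases List.mem_cons.1 h' with h'' | h''
          · exact absurd h'' hki
          · exact Or.inr h''
      refine hlt (f k) ?_
      rcases hkl with h' | h'
      · exact List.mem_append.2 (Or.inl (by rw [← hm1]; exact List.mem_map_of_mem h'))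
      · exact List.mem_append.2 (Or.inr (by rw [← hm3]; exact List.mem_map_of_mem h'))

lemma exists_other_ge {β : Type*} {s : Finset β} {f : β → T} {i : β} {a : ℝ}
    (hg : IsGhost (T.sum s f)) (hi : i ∈ s) (hfi : f i = real a) :
    ∃ k ∈ s, k ≠ i ∧ (a : WithBot ℝ) ≤ val (f k) := by
  by_contra hc
  push_neg at hc
  rw [sum_eq_real hi hfi (fun k hk hki => hc k hk hki)] at hg
  exact hg

lemma prodList_cons (x : T) (l : List T) : prodList (x :: l) = mul x (prodList l) := rfl

lemma isGhost_prodList {l : List T} {x : T} (hx : x ∈ l) (hg : IsGhost x) :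
    IsGhost (prodList l) := by
  induction l with
  | nil => simp at hx
  | cons y l ih =>
    rw [prodList_cons]
    rcases List.mem_cons.1 hx with rfl | h
    · exact isGhost_mul_left hg _
    · exact isGhost_mul_right _ (ih h)

lemma val_prodList (l : List T) : val (prodList l) = (l.map val).sum := by
  induction l with
  | nil => simp [prodList, val]
  | cons x l ih => rw [prodList_cons, val_mul, ih, List.map_cons, List.sum_cons]

lemma val_permProd {n : ℕ} (A : Matrix (Fin n) (Fin n) T) (σ : Equiv.Perm (Fin n)) :
    val (permProd A σ) = ∑ i : Fin n, val (A i (σ i)) := by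
  rw [permProd, val_prodList, List.map_map, Fin.sum_univ_def]
  rfl

lemma coe_finset_sum {β : Type*} (s : Finset β) (f : β → ℝ) :
    ((s.sum f : ℝ) : WithBot ℝ) = ∑ i ∈ s, ((f i : ℝ) : WithBot ℝ) := by
  classical
  induction s using Finset.cons_induction with
  | empty => simp
  | cons a s ha ih => rw [Finset.sum_cons, Finset.sum_cons, WithBot.coe_add, ih]

theorem det_isGhost_of_dependent {n : ℕ} (A : Matrix (Fin n) (Fin n) T)
    (h : Dependent (fun i j => A i j)) : IsGhost (det A) := by
  classical
  by_contra hdet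
  obtain ⟨α, hRB, ⟨i₀, hi₀⟩, hcol⟩ := h
  rw [det] at hdet
  obtain ⟨σ₀, -, M, hσ₀, hmax⟩ := exists_max_of_not_isGhost hdet
  have hcol' : ∀ j, IsGhost (T.sum Finset.univ fun i => mul (α i) (A i j)) := hcol
  -- all entries on σ₀ are real
  have hent : ∀ i, ∃ c : ℝ, A i (σ₀ i) = real c := by
    intro i
    have hmem : A i (σ₀ i) ∈ (List.finRange n).map (fun k => A k (σ₀ k)) :=
      List.mem_map_of_mem (List.mem_finRange i)
    cases hA : A i (σ₀ i) with
    | real c => exact ⟨c, rfl⟩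
    | bot =>
      exfalso
      rw [hA] at hmem
      have hg : IsGhost (permProd A σ₀) := isGhost_prodList hmem trivial
      rw [hσ₀] at hg
      exact hg
    | ghost b =>
      exfalso
      rw [hA] at hmem
      have hg : IsGhost (permProd A σ₀) := isGhost_prodList hmem trivial
      rw [hσ₀] at hg
      exact hg
  choose m hm using hent
  have hMsum : M = ∑ i : Fin n, m i := by
    have h1 : (M : WithBot ℝ) = ((∑ i : Fin n, m i : ℝ) : WithBot ℝ) := by
      have h2 : val (permProd A σ₀) = (M : WithBot ℝ) := by rw [hσ₀]; rfl
      rw [← h2, val_permProd, coe_finset_sum]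
      exact Finset.sum_congr rfl fun i _ => by rw [hm i]; rfl
    exact_mod_cast h1
  -- the step function
  have hstep : ∀ i, α i ≠ bot → ∃ k, α k ≠ bot ∧ k ≠ i ∧ A k (σ₀ i) ≠ bot ∧
      nval (α i) + m i ≤ nval (α k) + nval (A k (σ₀ i)) := by
    intro i hi
    obtain ⟨c, hc⟩ : ∃ c, α i = real c := by
      have hr := hRB i
      cases hα : α i with
      | bot => exact absurd hα hi
      | real c => exact ⟨c, rfl⟩
      | ghost b => rw [hα] at hr; exact absurd hr (by simp [RealOrBot])
    obtain ⟨k, hk, hki, hge⟩ := exists_other_ge (hcol' (σ₀ i)) (Finset.mem_univ i)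
      (show mul (α i) (A i (σ₀ i)) = real (c + m i) by rw [hc, hm i]; rfl)
    have hkb : α k ≠ bot := by
      intro hb
      rw [hb, bot_mul'] at hge
      exact absurd hge (by simp [val])
    have hAb : A k (σ₀ i) ≠ bot := by
      intro hb
      rw [hb, mul_bot'] at hge
      exact absurd hge (by simp [val])
    refine ⟨k, hkb, hki, hAb, ?_⟩
    rw [val_mul, val_ne_bot hkb, val_ne_bot hAb, ← WithBot.coe_add] at hge
    have hge' : c + m i ≤ nval (α k) + nval (A k (σ₀ i)) := by exact_mod_cast hge
    have hcc : nval (α i) = c := by rw [hc]; rfl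
    rw [hcc]
    exact hge'
  choose! g hg1 hg2 hg3 hg4 using hstep
  -- the orbit of i₀ under g stays in the support of α
  have horb : ∀ t : ℕ, α (g^[t] i₀) ≠ bot := by
    intro t
    induction t with
    | zero => exact hi₀
    | succ t ih => rw [Function.iterate_succ_apply']; exact hg1 _ ih
  -- pigeonhole: the orbit repeats
  have hrep : ∃ p q : ℕ, p < q ∧ g^[p] i₀ = g^[q] i₀ := by
    obtain ⟨a, b, hab, heq⟩ := Fintype.exists_ne_map_eq_of_card_lt
      (fun t : Fin (n + 1) => g^[(t : ℕ)] i₀) (by simp)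
    rcases Ne.lt_or_gt hab with hlt | hlt
    · exact ⟨a, b, hlt, heq⟩
    · exact ⟨b, a, hlt, heq.symm⟩
  obtain ⟨p, q, hpq, hpe⟩ := hrep
  set j₀ := g^[p] i₀ with hj₀
  have hper : g^[q - p] j₀ = j₀ := by
    rw [hj₀, ← Function.iterate_add_apply, Nat.sub_add_cancel hpq.le, ← hpe]
  have hex : ∃ t, 0 < t ∧ g^[t] j₀ = j₀ := ⟨q - p, Nat.sub_pos_of_lt hpq, hper⟩
  set r := Nat.find hex with hr
  obtain ⟨hrpos, hrper⟩ := Nat.find_spec hex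
  have hrmin : ∀ t, 0 < t → t < r → g^[t] j₀ ≠ j₀ := fun t h1 h2 he =>
    Nat.find_min hex h2 ⟨h1, he⟩
  have horb' : ∀ t, α (g^[t] j₀) ≠ bot := fun t => by
    rw [hj₀, ← Function.iterate_add_apply]; exact horb _
  -- distinctness of the cycle
  have hinj : ∀ s t, s < t → t < r → g^[s] j₀ ≠ g^[t] j₀ := by
    intro s t hst htr he
    have h1 : g^[r - t + t] j₀ = g^[r - t + s] j₀ := by
      rw [Function.iterate_add_apply, Function.iterate_add_apply, he]
    rw [Nat.sub_add_cancel htr.le, hrper] at h1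
    exact hrmin _ (by omega) (by omega) h1.symm
  -- the cycle as a list
  set l : List (Fin n) := (List.range r).map (fun t => g^[t] j₀) with hl
  have hlnd : l.Nodup := by
    refine List.Nodup.map_on ?_ List.nodup_range
    intro s hs t ht he
    rw [List.mem_range] at hs ht
    rcases lt_trichotomy s t with h' | h' | h'
    · exact absurd he (hinj s t h' ht)
    · exact h'
    · exact absurd he.symm (hinj t s h' hs)
  have hlen : l.length = r := by simp [hl]
  have hmeml : ∀ x, x ∈ l ↔ ∃ t, t < r ∧ g^[t] j₀ = x := by
    intro x
    constructor
    · intro hx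
      obtain ⟨t, ht, he⟩ := List.mem_map.1 hx
      exact ⟨t, List.mem_range.1 ht, he⟩
    · rintro ⟨t, ht, he⟩
      exact List.mem_map.2 ⟨t, List.mem_range.2 ht, he⟩
  have hj₀l : j₀ ∈ l := (hmeml _).2 ⟨0, hrpos, rfl⟩
  have hαl : ∀ x ∈ l, α x ≠ bot := by
    intro x hx
    obtain ⟨t, _, rfl⟩ := (hmeml x).1 hx
    exact horb' t
  set π := l.formPerm with hπ
  -- formPerm agrees with g on the cycle
  have hπg : ∀ x ∈ l, π x = g x := by
    intro x hx
    obtain ⟨t, htr, rfl⟩ := (hmeml x).1 hx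
    have htl : t < l.length := by rw [hlen]; exact htr
    have hget : l[t]'htl = g^[t] j₀ := by simp [hl]
    have hfp := List.formPerm_apply_getElem l hlnd t htl
    rw [hget] at hfp
    have hget2 : l[(t + 1) % l.length]'(Nat.mod_lt _ (by rw [hlen]; exact hrpos)) =
        g^[(t + 1) % r] j₀ := by simp [hl, hlen]
    rw [hπ, hfp, hget2]
    rcases Nat.lt_or_ge (t + 1) r with h' | h'
    · rw [Nat.mod_eq_of_lt h', Function.iterate_succ_apply']
    · have ht1 : t + 1 = r := le_antisymm htr h'
      rw [ht1, Nat.mod_self]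
      simp only [Function.iterate_zero_apply]
      have h9 : g (g^[t] j₀) = g^[t + 1] j₀ := (Function.iterate_succ_apply' g t j₀).symm
      rw [h9, ht1, hrper]
  have hgmem : ∀ x ∈ l, g x ∈ l := by
    intro x hx
    obtain ⟨t, htr, rfl⟩ := (hmeml x).1 hx
    have h9 : g (g^[t] j₀) = g^[t + 1] j₀ := (Function.iterate_succ_apply' g t j₀).symm
    rw [h9]
    rcases Nat.lt_or_ge (t + 1) r with h' | h'
    · exact (hmeml _).2 ⟨t + 1, h', rfl⟩
    · have ht1 : t + 1 = r := le_antisymm htr h'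
      rw [ht1, hrper]
      exact hj₀l
  have hπmem : ∀ x, x ∈ l ↔ π x ∈ l := by
    intro x
    constructor
    · intro hx; rw [hπg x hx]; exact hgmem x hx
    · intro hx
      by_contra hc
      rw [hπ, List.formPerm_apply_of_notMem hc] at hx
      exact hc hx
  have hπoff : ∀ x, x ∉ l → π x = x := fun x hx => by
    rw [hπ]; exact List.formPerm_apply_of_notMem hx
  have hπinvoff : ∀ x, x ∉ l → π⁻¹ x = x := by
    intro x hx
    conv_lhs => rw [← hπoff x hx]
    exact Equiv.symm_apply_apply π x
  have hπinvmem : ∀ x, x ∈ l → π⁻¹ x ∈ l := by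
    intro x hx
    by_contra hc
    have := hπoff _ hc
    rw [show π (π⁻¹ x) = x from Equiv.apply_symm_apply π x] at this
    rw [← this] at hc
    exact hc hx
  -- the competing permutation
  set τ := σ₀ * π⁻¹ with hτ
  have hτoff : ∀ i, i ∉ l → τ i = σ₀ i := fun i hi => by
    rw [hτ, Equiv.Perm.mul_apply, hπinvoff i hi]
  have hτon : ∀ j ∈ l, τ (π j) = σ₀ j := fun j _ => by
    rw [hτ, Equiv.Perm.mul_apply, show π⁻¹ (π j) = j from Equiv.symm_apply_apply π j]
  have hτne : τ ≠ σ₀ := by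
    intro he
    have h1 : τ (π j₀) = σ₀ j₀ := hτon j₀ hj₀l
    rw [he] at h1
    have h2 : π j₀ = j₀ := σ₀.injective h1
    rw [hπg j₀ hj₀l] at h2
    exact hg2 j₀ (hαl j₀ hj₀l) h2
  -- all entries on τ are non-bot
  have hτent : ∀ i, A i (τ i) ≠ bot := by
    intro i
    by_cases hi : i ∈ l
    · have hji : π⁻¹ i ∈ l := hπinvmem i hi
      have hgi : i = g (π⁻¹ i) := by
        conv_lhs => rw [← show π (π⁻¹ i) = i from Equiv.apply_symm_apply π i, hπg _ hji]
      have hτi : τ i = σ₀ (π⁻¹ i) := by rw [hτ, Equiv.Perm.mul_apply]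
      have h4 := hg3 (π⁻¹ i) (hαl _ hji)
      rw [← hgi] at h4
      rw [hτi]
      exact h4
    · rw [hτoff i hi, hm i]
      exact fun hc => T.noConfusion hc
  -- value computation for τ
  have hvτ : val (permProd A τ) = ((∑ i : Fin n, nval (A i (τ i)) : ℝ) : WithBot ℝ) := by
    rw [val_permProd, coe_finset_sum]
    exact Finset.sum_congr rfl fun i _ => val_ne_bot (hτent i)
  have hlt := hmax τ (Finset.mem_univ τ) hτne
  rw [hvτ, hMsum] at hlt
  have hltR : (∑ i : Fin n, nval (A i (τ i))) < ∑ i : Fin n, m i := by exact_mod_cast hlt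
  -- the sum inequality
  set C := l.toFinset with hC
  have hmemC : ∀ x : Fin n, x ∈ C ↔ x ∈ l := fun x => List.mem_toFinset
  have hre : ∀ F : Fin n → ℝ, ∑ j ∈ C, F (π j) = ∑ i ∈ C, F i := by
    intro F
    refine Finset.sum_equiv π (fun j => ?_) (fun j _ => rfl)
    rw [hmemC, hmemC]
    exact hπmem j
  have hkey : ∀ j ∈ C, nval (α j) + m j ≤ nval (α (π j)) + nval (A (π j) (σ₀ j)) := by
    intro j hj
    have hjl : j ∈ l := (hmemC j).1 hj
    rw [hπg j hjl]
    exact hg4 j (hαl j hjl)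
  have hsumC := Finset.sum_le_sum hkey
  rw [Finset.sum_add_distrib, Finset.sum_add_distrib,
    hre (fun x => nval (α x))] at hsumC
  have h5 : ∑ j ∈ C, m j ≤ ∑ j ∈ C, nval (A (π j) (σ₀ j)) := by linarith
  have h6 : ∑ j ∈ C, nval (A (π j) (σ₀ j)) = ∑ i ∈ C, nval (A i (τ i)) := by
    refine Finset.sum_equiv π (fun j => by rw [hmemC, hmemC]; exact hπmem j) ?_
    intro j hj
    rw [hτon j ((hmemC j).1 hj)]
  have h7 : ∑ i ∈ Cᶜ, nval (A i (τ i)) = ∑ i ∈ Cᶜ, m i := by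
    refine Finset.sum_congr rfl fun i hi => ?_
    have hil : i ∉ l := fun hc => (Finset.mem_compl.1 hi) ((hmemC i).2 hc)
    rw [hτoff i hil, hm i]
    rfl
  have h8 : ∑ i : Fin n, m i ≤ ∑ i : Fin n, nval (A i (τ i)) := by
    rw [← Finset.sum_add_sum_compl C (fun i => m i),
      ← Finset.sum_add_sum_compl C (fun i => nval (A i (τ i))), h7, ← h6]
    exact add_le_add_left h5 _
  exact absurd hltR (not_lt.2 h8)

end AuxProof

end T

/-- a square matrix whose rows are tropically dependent is
tropically singular. -/
theorem stmt13 {n : ℕ} (A : Matrix (Fin n) (Fin n) T)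
    (h : T.Dependent (fun i j => A i j)) :
    T.IsGhost (T.det A) :=
  T.det_isGhost_of_dependent A h
end
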